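/- Gordan's theorem in an RKHS: exactly one of the following holds: (1) there exists f ∈ F_K with y_i f(x_i) > 0 for all i; (2) there exists p ∈ Δ_n with Σ_i p_i y_i φ̃_{x_i} = 0 in F_K (equivalently pᵀGp = 0). -/

import Mathlib

open scoped RealInnerProductSpace

theorem stmt7 (n : ℕ) {H : Type*} [NormedAddCommGroup H] [InnerProductSpace ℝ H]
    [CompleteSpace H]
    (v : Fin n → H) (hv : ∀ i, ‖v i‖ = 1) :
    Xor' (∃ f : H, ∀ i, 0 < ⟪f, v i⟫)
      (∃ p ∈ stdSimplex ℝ (Fin n), ∑ i, p i • v i = (0 : H)) := by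
  classical
  set L : (Fin n → ℝ) →ₗ[ℝ] H :=
    { toFun := fun p => ∑ i, p i • v i
      map_add' := by intro p q; simp [add_smul, Finset.sum_add_distrib]
      map_smul' := by intro c p; simp [smul_smul, Finset.smul_sum] } with hL
  set s : Set H := L '' stdSimplex ℝ (Fin n) with hs
  have hnot : ¬ ((∃ f : H, ∀ i, 0 < ⟪f, v i⟫) ∧
      (∃ p ∈ stdSimplex ℝ (Fin n), ∑ i, p i • v i = (0 : H))) := by
    rintro ⟨⟨f, hf⟩, ⟨p, hp, hp0⟩⟩
    have h1 : ⟪f, ∑ i, p i • v i⟫ = ∑ i, p i * ⟪f, v i⟫ := by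
      simp [inner_sum, real_inner_smul_right]
    rw [hp0, inner_zero_right] at h1
    have hex : ∃ i, 0 < p i := by
      by_contra h
      push_neg at h
      have : ∑ i, p i = 0 := Finset.sum_eq_zero fun i _ => le_antisymm (h i) (hp.1 i)
      rw [hp.2] at this; norm_num at this
    obtain ⟨i, hi⟩ := hex
    have hpos : 0 < ∑ j, p j * ⟪f, v j⟫ :=
      Finset.sum_pos' (fun j _ => mul_nonneg (hp.1 j) (hf j).le)
        ⟨i, Finset.mem_univ i, mul_pos hi (hf i)⟩
    linarith
  by_cases h0 : (0 : H) ∈ s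
  · right
    obtain ⟨p, hp, hp0⟩ := h0
    have hp0' : ∑ i, p i • v i = (0 : H) := hp0
    exact ⟨⟨p, hp, hp0'⟩, fun h1 => hnot ⟨h1, ⟨p, hp, hp0'⟩⟩⟩
  · left
    have hLc : Continuous L := L.continuous_of_finiteDimensional
    have hsc : IsCompact s := (isCompact_stdSimplex ℝ (Fin n)).image hLc
    have hconv : Convex ℝ s := (convex_stdSimplex ℝ _).linear_image L
    obtain ⟨f, u, hu0, hu⟩ := geometric_hahn_banach_point_closed hconv hsc.isClosed h0
    refine ⟨⟨(InnerProductSpace.toDual ℝ H).symm f, fun i => ?_⟩, fun h2 => hnot ⟨?_, h2⟩⟩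
    · have hvi : v i ∈ s := by
        refine ⟨Pi.single i 1, single_mem_stdSimplex ℝ i, ?_⟩
        rw [hL]
        simp [Pi.single_apply, ite_smul]
      have hfv := hu _ hvi
      have hf0 : f 0 = 0 := map_zero f
      rw [InnerProductSpace.toDual_symm_apply]
      linarith
    · refine ⟨(InnerProductSpace.toDual ℝ H).symm f, fun i => ?_⟩
      have hvi : v i ∈ s := by
        refine ⟨Pi.single i 1, single_mem_stdSimplex ℝ i, ?_⟩
        rw [hL]
        simp [Pi.single_apply, ite_smul]
      have hfv := hu _ hvi
      have hf0 : f 0 = 0 := map_zero f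
      rw [InnerProductSpace.toDual_symm_apply]
      linarith
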